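/- Let K be a field of characteristic zero, let Q be a primary ideal of the polynomial ring K[x,s] (where x = (x_1,...,x_n) and s = (s_1,...,s_d) are two groups of variables), and let p be a point of K^n. Define B(Q,p) to be the set of polynomials b(s) in K[s] such that there exists a(x) in K[x] with a(p) ≠ 0 and a(x)·b(s) ∈ Q. If p lies in the zero set of Q ∩ K[x] (i.e., f(p) = 0 for every f ∈ Q ∩ K[x]), then B(Q,p) = Q ∩ K[s]; otherwise B(Q,p) = K[s]. -/
import Mathlib


open MvPolynomial

/-- For a primary ideal `Q` of `K[x,s]` and a point `p ∈ K^n`,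
`B(Q,p) = {b ∈ K[s] | ∃ a ∈ K[x], a(p) ≠ 0, a·b ∈ Q}` equals `Q ∩ K[s]`
if `p` lies in the zero set of `Q ∩ K[x]`, and equals all of `K[s]` otherwise. -/
theorem stmt_0 {K : Type} [Field K] [CharZero K] (n d : ℕ)
    (Q : Ideal (MvPolynomial (Fin n ⊕ Fin d) K)) (hQ : Q.IsPrimary)
    (p : Fin n → K) :
    ((∀ f : MvPolynomial (Fin n) K,
        (rename Sum.inl f : MvPolynomial (Fin n ⊕ Fin d) K) ∈ Q → eval p f = 0) →
      {b : MvPolynomial (Fin d) K | ∃ a : MvPolynomial (Fin n) K, eval p a ≠ 0 ∧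
          (rename Sum.inl a : MvPolynomial (Fin n ⊕ Fin d) K) * rename Sum.inr b ∈ Q}
        = {b : MvPolynomial (Fin d) K |
            (rename Sum.inr b : MvPolynomial (Fin n ⊕ Fin d) K) ∈ Q}) ∧
    ((¬ ∀ f : MvPolynomial (Fin n) K,
        (rename Sum.inl f : MvPolynomial (Fin n ⊕ Fin d) K) ∈ Q → eval p f = 0) →
      {b : MvPolynomial (Fin d) K | ∃ a : MvPolynomial (Fin n) K, eval p a ≠ 0 ∧
          (rename Sum.inl a : MvPolynomial (Fin n ⊕ Fin d) K) * rename Sum.inr b ∈ Q}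
        = Set.univ) := by
  constructor
  · intro hp
    ext b
    simp only [Set.mem_setOf_eq]
    constructor
    · rintro ⟨a, ha, hab⟩
      rw [mul_comm] at hab
      rcases (Ideal.isPrimary_iff.mp hQ).2 hab with h | h
      · exact h
      · rcases Ideal.mem_radical_iff.mp h with ⟨k, hk⟩
        rw [← map_pow] at hk
        have := hp _ hk
        rw [map_pow] at this
        exact absurd this (pow_ne_zero k ha)
    · intro hb
      exact ⟨1, by simp, by simpa using hb⟩
  · intro hp
    push_neg at hp
    obtain ⟨f, hf, hfp⟩ := hp
    ext b
    simp only [Set.mem_setOf_eq, Set.mem_univ, iff_true]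
    exact ⟨f, hfp, Q.mul_mem_right _ hf⟩
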